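/- For any feasible resource distribution x (with Σ_i x_i = 0, x_i ≥ −Γ_i, and without loss of generality x_i ≤ B_i/v_i for all i), and for the distribution x* defined by x*_i = B_i/v_i for i ≤ k*, x*_{k*+1} = Σ_{i=k*+2}^n Γ_i − Σ_{i=1}^{k*} B_i/v_i, x*_i = −Γ_i for i ≥ k*+2, it holds that Σ_{i=1}^{k*}(v_i − v_{k*+1})x_i − Σ_{i=k*+2}^n (v_{k*+1} − v_i)x_i ≤ Σ_{i=1}^{k*}(v_i − v_{k*+1})x*_i − Σ_{i=k*+2}^n (v_{k*+1} − v_i)x*_i. -/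

import Mathlib

open Finset

/-- Key exchange-argument inequality in the proof of the optimal-distribution lemma:
among feasible distributions with `x i ≤ B i / v i`, the specific `xs` maximizes the
weighted objective
`∑_{i≤k} (v_i − v_{k+1}) x_i − ∑_{i≥k+2} (v_{k+1} − v_i) x_i`. -/
theorem stmt_1 (n : ℕ) (v B Γ : ℕ → ℝ)
    (hv : ∀ i ∈ Icc 1 n, 0 < v i)
    (hsort : ∀ i ∈ Icc 1 n, ∀ j ∈ Icc 1 n, i ≤ j → v j ≤ v i)
    (hB : ∀ i ∈ Icc 1 n, 0 ≤ B i) (hΓ : ∀ i ∈ Icc 1 n, 0 ≤ Γ i)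
    (k : ℕ) (hk1 : 1 ≤ k) (hkn : k ≤ n)
    (hkle : ∑ i ∈ Icc 1 k, B i / v i ≤ ∑ i ∈ Icc (k+1) n, Γ i)
    (hkmax : ∀ l, 1 ≤ l → l ≤ n →
      (∑ i ∈ Icc 1 l, B i / v i ≤ ∑ i ∈ Icc (l+1) n, Γ i) → l ≤ k)
    (xs : ℕ → ℝ)
    (hxs1 : ∀ i, 1 ≤ i → i ≤ k → xs i = B i / v i)
    (hxs2 : xs (k+1) = ∑ i ∈ Icc (k+2) n, Γ i - ∑ i ∈ Icc 1 k, B i / v i)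
    (hxs3 : ∀ i, k+2 ≤ i → i ≤ n → xs i = -Γ i)
    (x : ℕ → ℝ)
    (hfeas1 : ∑ i ∈ Icc 1 n, x i = 0)
    (hfeas2 : ∀ i ∈ Icc 1 n, -Γ i ≤ x i)
    (hub : ∀ i ∈ Icc 1 n, x i ≤ B i / v i) :
    ∑ i ∈ Icc 1 k, (v i - v (k+1)) * x i
      - ∑ i ∈ Icc (k+2) n, (v (k+1) - v i) * x i ≤
    ∑ i ∈ Icc 1 k, (v i - v (k+1)) * xs i
      - ∑ i ∈ Icc (k+2) n, (v (k+1) - v i) * xs i := by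
  by_cases hkn' : k + 1 ≤ n
  · -- main case: weights are nonnegative, termwise comparison
    have hk1n : k + 1 ∈ Icc 1 n := by simp [Nat.le_add_right, hkn']
    have h1 : ∑ i ∈ Icc 1 k, (v i - v (k+1)) * x i ≤
        ∑ i ∈ Icc 1 k, (v i - v (k+1)) * xs i := by
      apply Finset.sum_le_sum
      intro i hi
      simp only [mem_Icc] at hi
      have hin : i ∈ Icc 1 n := by simp [hi.1, le_trans hi.2 hkn]
      have hw : 0 ≤ v i - v (k+1) :=
        sub_nonneg.mpr (hsort i hin (k+1) hk1n (le_trans hi.2 (Nat.le_succ k)))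
      have := hub i hin
      rw [hxs1 i hi.1 hi.2]
      exact mul_le_mul_of_nonneg_left this hw
    have h2 : ∑ i ∈ Icc (k+2) n, (v (k+1) - v i) * xs i ≤
        ∑ i ∈ Icc (k+2) n, (v (k+1) - v i) * x i := by
      apply Finset.sum_le_sum
      intro i hi
      simp only [mem_Icc] at hi
      have hin : i ∈ Icc 1 n := by
        simp [le_trans (by omega : 1 ≤ k + 2) hi.1, hi.2]
      have hw : 0 ≤ v (k+1) - v i :=
        sub_nonneg.mpr (hsort (k+1) hk1n i hin (by omega))
      have := hfeas2 i hin
      rw [hxs3 i hi.1 hi.2]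
      exact mul_le_mul_of_nonneg_left this hw
    linarith
  · -- k = n: all B i / v i = 0 and all x i = 0
    have hke : k = n := by omega
    subst hke
    have hempty : Icc (k+2) k = (∅ : Finset ℕ) := by
      apply Icc_eq_empty; omega
    have hnn : ∀ i ∈ Icc 1 k, 0 ≤ B i / v i := fun i hi =>
      div_nonneg (hB i hi) (le_of_lt (hv i hi))
    have hsum0 : ∑ i ∈ Icc (k+1) k, Γ i = 0 := by
      rw [Icc_eq_empty (by omega)]; simp
    have hall0 : ∀ i ∈ Icc 1 k, B i / v i = 0 := by
      intro i hi
      have := Finset.sum_nonneg hnn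
      have hle : ∑ i ∈ Icc 1 k, B i / v i ≤ 0 := by rw [hsum0] at hkle; exact hkle
      have hs0 : ∑ i ∈ Icc 1 k, B i / v i = 0 := le_antisymm hle this
      exact (Finset.sum_eq_zero_iff_of_nonneg hnn).mp hs0 i hi
    have hx0 : ∀ i ∈ Icc 1 k, x i = 0 := by
      have hnp : ∀ i ∈ Icc 1 k, x i ≤ 0 := fun i hi => by
        have := hub i hi; rw [hall0 i hi] at this; exact this
      intro i hi
      have := (Finset.sum_eq_zero_iff_of_nonneg
        (fun i hi => by simpa using neg_nonneg.mpr (hnp i hi))).mp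
        (by simp [hfeas1] : ∑ i ∈ Icc 1 k, -x i = 0) i hi
      simpa using this
    have hxs0 : ∀ i ∈ Icc 1 k, xs i = 0 := fun i hi => by
      simp only [mem_Icc] at hi
      rw [hxs1 i hi.1 hi.2]
      exact hall0 i (by simp [hi.1, hi.2])
    rw [hempty]
    simp only [Finset.sum_empty, sub_zero]
    have e1 : ∑ i ∈ Icc 1 k, (v i - v (k+1)) * x i = 0 :=
      Finset.sum_eq_zero (fun i hi => by rw [hx0 i hi, mul_zero])
    have e2 : ∑ i ∈ Icc 1 k, (v i - v (k+1)) * xs i = 0 :=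
      Finset.sum_eq_zero (fun i hi => by rw [hxs0 i hi, mul_zero])
    rw [e1, e2]
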